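/- Let X ⊆ A^{Σ*} be a sofic tree shift. Then the set of regular configurations of X (configurations f ∈ X whose orbit {f^w : w ∈ Σ*} under the shift action is finite) is dense in X with respect to the prodiscrete topology. -/

import Mathlib

/-! Common definitions: configurations over the regular rooted tree `Σ*`
(words = `List Sg`), the shift action, tree shifts, blocks, shifts of finite
type, cellular automata, sofic tree shifts, unrestricted Rabin automata. -/

/-- The shift action: `f^w (w') = f (w ++ w')`. -/
def shiftMap {Sg A : Type} (f : List Sg → A) (w : List Sg) : List Sg → A :=
  fun w' => f (w ++ w')

/-- The orbit `{f^w : w ∈ Σ*}` of a configuration under the shift action. -/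
def shiftOrbit {Sg A : Type} (f : List Sg → A) : Set (List Sg → A) :=
  Set.range (shiftMap f)

/-- A configuration is regular if its orbit under the shift action is finite. -/
def IsRegularConfig {Sg A : Type} (f : List Sg → A) : Prop :=
  (shiftOrbit f).Finite

/-- A tree shift: a subset of `A^{Σ*}` that is closed in the prodiscrete
topology and invariant under the shift action. -/
def IsTreeShift {Sg A : Type} [TopologicalSpace A] (X : Set (List Sg → A)) : Prop :=
  IsClosed X ∧ ∀ f ∈ X, ∀ w : List Sg, shiftMap f w ∈ X

/-- A block of size `n + 1`: a map `Δ_{n+1} → A`, where `Δ_k` is the set of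
words of length `< k` (so blocks have size `≥ 1`). -/
def TreeBlock (Sg A : Type) : Type :=
  (n : ℕ) × ({w : List Sg // w.length < n + 1} → A)

/-- The restriction of `f^w` to `Δ_{n+1}`, viewed as a block. -/
def blockAt {Sg A : Type} (f : List Sg → A) (w : List Sg) (n : ℕ) : TreeBlock Sg A :=
  ⟨n, fun m => f (w ++ m.val)⟩

/-- `X(F)`: the set of configurations avoiding every block in `F`. -/
def avoids {Sg A : Type} (F : Set (TreeBlock Sg A)) : Set (List Sg → A) :=
  {f | ∀ (w : List Sg) (n : ℕ), blockAt f w n ∉ F}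

/-- A tree shift of finite type: `X = X(F)` for some finite set `F` of blocks. -/
def IsSFT {Sg A : Type} (X : Set (List Sg → A)) : Prop :=
  ∃ F : Set (TreeBlock Sg A), F.Finite ∧ X = avoids F

/-- A cellular automaton `τ : X → B^{Σ*}`: there are a finite memory set
`M ⊆ Σ*` and a local map `μ : A^M → B` with `τ(f)(w) = μ((f^w)|_M)`. -/
def IsCellularAutomaton {Sg A B : Type} (X : Set (List Sg → A))
    (τ : X → List Sg → B) : Prop :=
  ∃ (M : Finset (List Sg)) (μ : ({m : List Sg // m ∈ M} → A) → B),
    ∀ (f : X) (w : List Sg), τ f w = μ (fun m => f.val (w ++ m.val))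

/-- A sofic tree shift: the image of a tree shift of finite type under a
cellular automaton. -/
def IsSofic {Sg A : Type} (X : Set (List Sg → A)) : Prop :=
  ∃ (C : Type) (_ : Finite C) (Y : Set (List Sg → C)) (τ : Y → List Sg → A),
    IsSFT Y ∧ IsCellularAutomaton Y τ ∧ X = Set.range τ

/-- An unrestricted Rabin automaton: a nonempty finite state set `S` and a set
of transition bundles `𝒯 ⊆ S × A × S^Σ`. -/
structure URA (Sg A : Type) where
  S : Type
  [finS : Finite S]
  [neS : Nonempty S]
  T : Set (S × A × (Sg → S))

attribute [instance] URA.finS URA.neS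

/-- Acceptance of a configuration by an unrestricted Rabin automaton. -/
def URA.Accepts {Sg A : Type} (𝒜 : URA Sg A) (f : List Sg → A) : Prop :=
  ∃ α : List Sg → 𝒜.S,
    ∀ w : List Sg, (α w, f w, fun σ => α (w ++ [σ])) ∈ 𝒜.T

/-- `Sh_𝒜`: the set of configurations accepted by `𝒜`. -/
def URA.shift {Sg A : Type} (𝒜 : URA Sg A) : Set (List Sg → A) :=
  {f | 𝒜.Accepts f}

/-- `𝒜` is essential if every state is the source of some transition bundle. -/
def URA.Essential {Sg A : Type} (𝒜 : URA Sg A) : Prop :=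
  ∀ s : 𝒜.S, ∃ t ∈ 𝒜.T, t.1 = s

/-- `𝒜` is co-deterministic if for every terminal sequence and label there is
at most one transition bundle with that terminal sequence and label. -/
def URA.CoDeterministic {Sg A : Type} (𝒜 : URA Sg A) : Prop :=
  ∀ t ∈ 𝒜.T, ∀ t' ∈ 𝒜.T, t.2.1 = t'.2.1 → t.2.2 = t'.2.2 → t = t'

/-- `𝒜` is co-complete if for every terminal sequence and label there is at
least one transition bundle with that terminal sequence and label. -/
def URA.CoComplete {Sg A : Type} (𝒜 : URA Sg A) : Prop :=
  ∀ (s : Sg → 𝒜.S) (a : A), ∃ t ∈ 𝒜.T, t.2.1 = a ∧ t.2.2 = s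

/-- One step along a bundle path: some transition bundle has source `s` and
`σ`-terminal state `s'` for some `σ`. -/
def URA.Step {Sg A : Type} (𝒜 : URA Sg A) (s s' : 𝒜.S) : Prop :=
  ∃ t ∈ 𝒜.T, t.1 = s ∧ ∃ σ : Sg, t.2.2 σ = s'

/-- `𝒜` is strongly connected if any state can be joined to any other by a
bundle path (possibly empty). -/
def URA.StronglyConnected {Sg A : Type} (𝒜 : URA Sg A) : Prop :=
  ∀ s s' : 𝒜.S, Relation.ReflTransGen 𝒜.Step s s'

/-- A tree shift `X` is irreducible if for all blocks `p ∈ X_n`, `q ∈ X_m`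
there is `f ∈ X` with `f|_{Δ_n} = p` and, for every `w ∈ Σ^n`, some `v` with
`f|_{w v Δ_m} = w v · q`. -/
def IsIrreducibleShift {Sg A : Type} (X : Set (List Sg → A)) : Prop :=
  ∀ (n m : ℕ) (p q : List Sg → A),
    (∃ fp ∈ X, ∀ u : List Sg, u.length < n → fp u = p u) →
    (∃ fq ∈ X, ∀ u : List Sg, u.length < m → fq u = q u) →
    ∃ f ∈ X, (∀ u : List Sg, u.length < n → f u = p u) ∧
      ∀ w : List Sg, w.length = n → ∃ v : List Sg,
        ∀ u : List Sg, u.length < m → f (w ++ v ++ u) = q u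

/-- A subtree of `Σ*`: contains the root `ε` and is prefix-closed. -/
def IsSubtree {Sg : Type} (T : Set (List Sg)) : Prop :=
  ([] : List Sg) ∈ T ∧ ∀ u v : List Sg, u ++ v ∈ T → u ∈ T

/-- A full subtree: each vertex has either all of its children or none. -/
def IsFullSubtree {Sg : Type} (T : Set (List Sg)) : Prop :=
  IsSubtree T ∧ ∀ w ∈ T, (∀ σ : Sg, w ++ [σ] ∈ T) ∨ (∀ σ : Sg, w ++ [σ] ∉ T)

/-- `T⁺ = T ∪ {wσ : w ∈ T, σ ∈ Σ}`. -/
def treePlus {Sg : Type} (T : Set (List Sg)) : Set (List Sg) :=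
  T ∪ {x | ∃ w ∈ T, ∃ σ : Sg, x = w ++ [σ]}

/-- Acceptance of the full-tree-pattern `p : T → A` by the finite-tree
automaton `𝒜(I, F)` (initial states `I`, final state `F`). -/
def FTAccepts {Sg A : Type} (𝒜 : URA Sg A) (I : Set 𝒜.S) (F : 𝒜.S)
    (T : Set (List Sg)) (p : List Sg → A) : Prop :=
  ∃ α : List Sg → 𝒜.S,
    (∀ w ∈ T, (α w, p w, fun σ => α (w ++ [σ])) ∈ 𝒜.T) ∧
    α [] ∈ I ∧
    ∀ w ∈ treePlus T, w ∉ T → α w = F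

/-- A Rabin automaton: an unrestricted Rabin automaton together with a set of
initial states and a family of accepting sets. -/
structure RabinAutomaton (Sg A : Type) where
  toURA : URA Sg A
  I : Set toURA.S
  Acc : Set (Set toURA.S)

/-- Acceptance by a Rabin automaton: a homomorphism realizing `f`, starting at
an initial state, and such that along every right-infinite word, the set of
states visited infinitely often belongs to the family of accepting sets. -/
def RabinAccepts {Sg A : Type} (𝒜 : RabinAutomaton Sg A) (f : List Sg → A) : Prop :=
  ∃ α : List Sg → 𝒜.toURA.S,
    (∀ w : List Sg, (α w, f w, fun σ => α (w ++ [σ])) ∈ 𝒜.toURA.T) ∧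
    α [] ∈ 𝒜.I ∧
    ∀ ω : ℕ → Sg,
      {s : 𝒜.toURA.S | ∀ N : ℕ, ∃ n ≥ N, α ((List.range n).map ω) = s} ∈ 𝒜.Acc

namespace RegAux

variable {Sg C : Type}

/-- Blocks of height `k+1`. -/
abbrev Blk (Sg C : Type) (k : ℕ) := {u : List Sg // u.length < k + 1} → C

def blk (k : ℕ) (g : List Sg → C) (w : List Sg) : Blk Sg C k :=
  fun u => g (w ++ u.val)

noncomputable def rep (k : ℕ) (g : List Sg → C) (b : Blk Sg C k) : List Sg :=
  Classical.epsilon fun w => blk k g w = b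

noncomputable def dlt (k : ℕ) (g : List Sg → C) (b : Blk Sg C k) (σ : Sg) : Blk Sg C k :=
  blk k g (rep k g b ++ [σ])

noncomputable def psi (k N : ℕ) (g : List Sg → C) : List Sg → Blk Sg C k
  | [] => blk k g []
  | σ :: l => if l.length + 1 ≤ N then blk k g (σ :: l).reverse else dlt k g (psi k N g l) σ

noncomputable def phi (k N : ℕ) (g : List Sg → C) (w : List Sg) : Blk Sg C k :=
  psi k N g w.reverse

lemma phi_eq_blk (k N : ℕ) (g : List Sg → C) (w : List Sg) (hw : w.length ≤ N) :
    phi k N g w = blk k g w := by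
  induction w using List.reverseRecOn with
  | nil => rfl
  | append_singleton w σ ih =>
    unfold phi
    rw [List.reverse_append]
    simp only [List.reverse_singleton, List.singleton_append, psi, List.append_eq, List.nil_append]
    have hl : w.reverse.length + 1 ≤ N := by simpa using hw
    rw [if_pos hl]
    simp

lemma phi_append (k N : ℕ) (g : List Sg → C) (w : List Sg) (σ : Sg)
    (hw : N < w.length + 1) :
    phi k N g (w ++ [σ]) = dlt k g (phi k N g w) σ := by
  unfold phi
  rw [List.reverse_append]
  simp only [List.reverse_singleton, List.singleton_append, psi, List.append_eq, List.nil_append]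
  rw [if_neg (by simpa using Nat.not_le.mpr hw)]

lemma phi_rep (k N : ℕ) (g : List Sg → C) (w : List Sg) :
    ∃ w0, phi k N g w = blk k g w0 := by
  induction w using List.reverseRecOn with
  | nil => exact ⟨[], rfl⟩
  | append_singleton w σ ih =>
    by_cases h : (w ++ [σ]).length ≤ N
    · exact ⟨w ++ [σ], phi_eq_blk k N g _ h⟩
    · refine ⟨rep k g (phi k N g w) ++ [σ], ?_⟩
      rw [phi_append k N g w σ (by simp at h; omega)]
      rfl

lemma phi_cons (k N : ℕ) (g : List Sg → C) (w : List Sg) (σ : Sg) (u : List Sg)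
    (hu : u.length + 1 < k + 1) :
    phi k N g (w ++ [σ]) ⟨u, Nat.lt_of_succ_lt hu⟩
      = phi k N g w ⟨σ :: u, by simpa using hu⟩ := by
  by_cases h : w.length + 1 ≤ N
  · rw [phi_eq_blk k N g (w ++ [σ]) (by simpa using h),
      phi_eq_blk k N g w (Nat.le_of_succ_le h)]
    simp [blk]
  · rw [phi_append k N g w σ (by omega)]
    obtain ⟨w0, hw0⟩ := phi_rep k N g w
    have hrep : blk k g (rep k g (phi k N g w)) = phi k N g w :=
      Classical.epsilon_spec (p := fun v => blk k g v = phi k N g w) ⟨w0, hw0.symm⟩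
    show blk k g (rep k g (phi k N g w) ++ [σ]) ⟨u, _⟩ = _
    conv_rhs => rw [← hrep]
    simp [blk]

lemma phi_compat (k N : ℕ) (g : List Sg → C) (u : List Sg) :
    ∀ (w : List Sg) (hu : u.length < k + 1),
      phi k N g (w ++ u) ⟨[], Nat.succ_pos k⟩ = phi k N g w ⟨u, hu⟩ := by
  induction u with
  | nil => intro w hu; simp
  | cons σ u ih =>
    intro w hu
    have hw : w ++ σ :: u = (w ++ [σ]) ++ u := by simp
    rw [hw, ih (w ++ [σ]) (by simp at hu ⊢; omega)]
    exact phi_cons k N g w σ u (by simpa using hu)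

noncomputable def dstar (k : ℕ) (g : List Sg → C) (b : Blk Sg C k) : List Sg → Blk Sg C k
  | [] => b
  | σ :: u => dstar k g (dlt k g b σ) u

lemma phi_dstar (k N : ℕ) (g : List Sg → C) (u : List Sg) :
    ∀ (w : List Sg), N ≤ w.length →
      phi k N g (w ++ u) = dstar k g (phi k N g w) u := by
  induction u with
  | nil => intro w hw; simp [dstar]
  | cons σ u ih =>
    intro w hw
    have hw2 : w ++ σ :: u = (w ++ [σ]) ++ u := by simp
    rw [hw2, ih (w ++ [σ]) (by simp; omega), phi_append k N g w σ (by omega)]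
    rfl

noncomputable def hcfg (k N : ℕ) (g : List Sg → C) (w : List Sg) : C :=
  phi k N g w ⟨[], Nat.succ_pos k⟩

lemma hcfg_eq (k N : ℕ) (g : List Sg → C) (w : List Sg) (hw : w.length ≤ N) :
    hcfg k N g w = g w := by
  unfold hcfg
  rw [phi_eq_blk k N g w hw]
  simp [blk]

end RegAux

open RegAux

/-- the regular configurations of a sofic tree shift `X` are
dense in `X`. -/
theorem regular_dense_in_sofic {Sg A : Type} [Finite Sg] [Nonempty Sg] [Finite A]
    [TopologicalSpace A] [DiscreteTopology A]
    (X : Set (List Sg → A)) (hX : IsSofic X) :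
    X ⊆ closure {f | f ∈ X ∧ IsRegularConfig f} := by
  obtain ⟨C, hC, Y, τ, ⟨F, hFfin, hYF⟩, ⟨M, μ, hτ⟩, hXτ⟩ := hX
  intro f hf
  rw [mem_closure_iff_nhds]
  intro U hU
  rw [nhds_pi] at hU
  obtain ⟨I, hI, V, hV, hsub⟩ := Filter.mem_pi.mp hU
  obtain ⟨⟨g, hgY⟩, hgf⟩ : f ∈ Set.range τ := hXτ ▸ hf
  have hgav : g ∈ avoids F := hYF ▸ hgY
  -- parameters
  set k : ℕ := hFfin.toFinset.sup Sigma.fst with hk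
  set N : ℕ := hI.toFinset.sup List.length + M.sup List.length with hN
  set h : List Sg → C := hcfg k N g with hdef
  -- h is in Y
  have hhY : h ∈ Y := by
    rw [hYF]
    intro w n hmem
    have hn : n ≤ k := by
      have := Finset.le_sup (f := Sigma.fst) (hFfin.mem_toFinset.mpr hmem)
      exact this
    obtain ⟨w0, hw0⟩ := phi_rep k N g w
    have heq : blockAt h w n = blockAt g w0 n := by
      unfold blockAt
      refine congrArg (Sigma.mk n) (funext fun m => ?_)
      have hm : m.val.length < k + 1 := by
        have := m.property; omega
      have := phi_compat k N g m.val w hm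
      calc h (w ++ m.val) = phi k N g w ⟨m.val, hm⟩ := this
        _ = blk k g w0 ⟨m.val, hm⟩ := by rw [hw0]
        _ = g (w0 ++ m.val) := rfl
    exact hgav w0 n (heq ▸ hmem)
  -- the candidate configuration
  set f' : List Sg → A := τ ⟨h, hhY⟩ with hf'
  have hf'X : f' ∈ X := hXτ ▸ Set.mem_range_self _
  -- finiteness instances
  have hfin1 : {u : List Sg | u.length < k + 1}.Finite := List.finite_length_lt (α := Sg) (k + 1)
  haveI : Finite {u : List Sg // u.length < k + 1} := hfin1.to_subtype
  -- orbit of h is finite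
  have horbh : (shiftOrbit h).Finite := by
    have hsub2 : shiftOrbit h ⊆
        (shiftMap h '' {w | w.length < N}) ∪
        (Set.range (fun b : Blk Sg C k => fun u => dstar k g b u ⟨[], Nat.succ_pos k⟩)) := by
      rintro _ ⟨w, rfl⟩
      by_cases hw : w.length < N
      · exact Or.inl ⟨w, hw, rfl⟩
      · refine Or.inr ⟨phi k N g w, ?_⟩
        funext u
        have hds := phi_dstar k N g u w (by omega)
        show dstar k g (phi k N g w) u ⟨[], Nat.succ_pos k⟩ = h (w ++ u)
        rw [← hds]
        rfl
    refine Set.Finite.subset (Set.Finite.union ?_ (Set.finite_range _)) hsub2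
    exact Set.Finite.image _ (List.finite_length_lt (α := Sg) N)
  -- orbit of f' is finite
  have hreg : IsRegularConfig f' := by
    have hsub3 : shiftOrbit f' ⊆
        (fun g' : List Sg → C => fun u => μ (fun m => g' (u ++ m.val))) '' shiftOrbit h := by
      rintro _ ⟨w, rfl⟩
      refine ⟨shiftMap h w, ⟨w, rfl⟩, ?_⟩
      funext u
      show μ (fun m => h (w ++ (u ++ m.val))) = shiftMap f' w u
      rw [shiftMap, hf', hτ ⟨h, hhY⟩ (w ++ u)]
      simp [List.append_assoc]
    exact Set.Finite.subset (horbh.image _) hsub3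
  -- f' agrees with f on I
  have hagree : ∀ w ∈ I, f' w = f w := by
    intro w hw
    rw [hf', hτ ⟨h, hhY⟩ w, ← hgf, hτ ⟨g, hgY⟩ w]
    refine congrArg μ (funext fun m => ?_)
    show h (w ++ m.val) = g (w ++ m.val)
    refine hcfg_eq k N g _ ?_
    have h1 : w.length ≤ hI.toFinset.sup List.length :=
      Finset.le_sup (hI.mem_toFinset.mpr hw)
    have h2 : m.val.length ≤ M.sup List.length := Finset.le_sup m.property
    simp only [List.length_append, hN]
    omega
  refine ⟨f', hsub ?_, hf'X, hreg⟩
  intro w hw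
  rw [hagree w hw]
  have := hV w
  rwa [nhds_discrete, Filter.mem_pure] at this
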